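/- Two special points of the upper half plane lie in the same GL₂⁺(ℚ)-orbit if and only if they lie in the same imaginary quadratic field. Moreover, for a special point s in an imaginary quadratic field K, the orbit GL₂⁺(ℚ)·s equals K ∩ ℍ. -/

import Mathlib

noncomputable section

/-- The Möbius action of a rational 2×2 matrix on ℂ. -/
def moebQ (a b c d : ℚ) (z : ℂ) : ℂ := ((a : ℂ) * z + b) / ((c : ℂ) * z + d)

/-- A point of the upper half plane is special if it is fixed by some nonscalar
element of GL₂⁺(ℚ). -/
def IsSpecialPt (s : ℂ) : Prop :=
  0 < s.im ∧ ∃ a b c d : ℚ, 0 < a * d - b * c ∧ ¬ (b = 0 ∧ c = 0 ∧ a = d) ∧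
    moebQ a b c d s = s

/-- Two points of ℂ lie in the same GL₂⁺(ℚ)-orbit. -/
def SameGOrbit (s t : ℂ) : Prop :=
  ∃ a b c d : ℚ, 0 < a * d - b * c ∧ moebQ a b c d s = t

/-- An imaginary quadratic field, viewed inside ℂ. -/
def IsImagQuad (K : IntermediateField ℚ ℂ) : Prop :=
  Module.finrank ℚ K = 2 ∧ ∃ z : ℂ, z ∈ K ∧ z.im ≠ 0

lemma memK {K : IntermediateField ℚ ℂ} (a b c d : ℚ) {s : ℂ} (hs : s ∈ K) :
    moebQ a b c d s ∈ K := by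
  have hq : ∀ q : ℚ, (q : ℂ) ∈ K := fun q => by
    simpa using K.algebraMap_mem q
  exact div_mem (add_mem (mul_mem (hq a) hs) (hq b)) (add_mem (mul_mem (hq c) hs) (hq d))

lemma imMoeb {a b c d : ℚ} {s : ℂ} (hdet : 0 < a * d - b * c) (him : 0 < s.im) :
    0 < (moebQ a b c d s).im := by
  set w : ℂ := (c : ℂ) * s + d with hw
  have hwne : w ≠ 0 := by
    intro h
    have h1 : (c : ℝ) * s.im = 0 := by
      have := congrArg Complex.im h
      simpa [hw] using this
    have hc : (c : ℝ) = 0 := by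
      rcases mul_eq_zero.1 h1 with h' | h'
      · exact h'
      · exact absurd h' him.ne'
    have hc' : c = 0 := by exact_mod_cast hc
    have h2 : (d : ℂ) = 0 := by simpa [hw, hc'] using h
    have hd : d = 0 := by exact_mod_cast h2
    rw [hc', hd] at hdet; simp at hdet
  have him2 : (moebQ a b c d s).im = (a * d - b * c) * s.im / Complex.normSq w := by
    rw [moebQ, Complex.div_im]
    simp [hw, Complex.normSq_apply]
    ring
  rw [him2]
  exact div_pos (mul_pos (by exact_mod_cast hdet) him) (Complex.normSq_pos.2 hwne)

lemma reprK {K : IntermediateField ℚ ℂ} (h2 : Module.finrank ℚ K = 2) {s : ℂ}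
    (hs : s ∈ K) (him : s.im ≠ 0) {z : ℂ} (hz : z ∈ K) : ∃ a b : ℚ, z = a * s + b := by
  set v : Fin 2 → K := ![⟨s, hs⟩, 1] with hv
  have hli : LinearIndependent ℚ v := by
    rw [hv]
    rw [LinearIndependent.pair_iff]
    intro p q hpq
    have hC : (p : ℂ) * s + q = 0 := by
      have := congrArg (Subtype.val) hpq
      push_cast at this
      simpa [Rat.smul_def] using this
    have hpim : (p : ℝ) * s.im = 0 := by
      have := congrArg Complex.im hC
      simpa using this
    have hp : p = 0 := by
      rcases mul_eq_zero.1 hpim with h' | h'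
      · exact_mod_cast h'
      · exact absurd h' him
    have hq : q = 0 := by
      rw [hp] at hC
      simpa using hC
    exact ⟨hp, hq⟩
  have hcard : Fintype.card (Fin 2) = Module.finrank ℚ K := by simp [h2]
  set B := basisOfLinearIndependentOfCardEqFinrank hli hcard with hB
  have hrepr := B.sum_repr ⟨z, hz⟩
  rw [Fin.sum_univ_two] at hrepr
  refine ⟨B.repr ⟨z, hz⟩ 0, B.repr ⟨z, hz⟩ 1, ?_⟩
  have hB0 : B 0 = ⟨s, hs⟩ := by
    rw [hB, coe_basisOfLinearIndependentOfCardEqFinrank]; rfl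
  have hB1 : B 1 = 1 := by
    rw [hB, coe_basisOfLinearIndependentOfCardEqFinrank]; rfl
  rw [hB0, hB1] at hrepr
  have := congrArg (Subtype.val) hrepr
  push_cast [Rat.smul_def] at this
  linear_combination -this

lemma quadOfSpecial {s : ℂ} (hs : IsSpecialPt s) : ∃ p q : ℚ, s ^ 2 = (p : ℂ) * s + q := by
  obtain ⟨him, a, b, c, d, hdet, hns, heq⟩ := hs
  set w : ℂ := (c : ℂ) * s + d with hw
  have hwne : w ≠ 0 := by
    intro h
    have h1 : (c : ℝ) * s.im = 0 := by
      have := congrArg Complex.im h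
      simpa [hw] using this
    have hc : c = 0 := by
      rcases mul_eq_zero.1 h1 with h' | h'
      · exact_mod_cast h'
      · exact absurd h' him.ne'
    have hd : d = 0 := by
      have h2 : (d : ℂ) = 0 := by simpa [hw, hc] using h
      exact_mod_cast h2
    rw [hc, hd] at hdet; simp at hdet
  have key : (a : ℂ) * s + b = s * w := by
    rw [moebQ] at heq
    have hw' : (c : ℂ) * s + d ≠ 0 := by rw [← hw]; exact hwne
    rw [div_eq_iff hw'] at heq
    rw [hw]
    linear_combination heq
  have hcne : c ≠ 0 := by
    intro hc
    rw [hw, hc] at key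
    push_cast at key
    by_cases had : a = d
    · have hb : (b : ℂ) = 0 := by
        rw [had] at key
        linear_combination key
      exact hns ⟨by exact_mod_cast hb, hc, had⟩
    · have hsval : s = (b : ℂ) / ((d : ℂ) - a) := by
        have hne : (d : ℂ) - a ≠ 0 := by
          intro h
          apply had
          have : (a : ℂ) = d := by linear_combination -h
          exact_mod_cast this
        field_simp
        linear_combination -key
      have hrat : s = (((b / (d - a) : ℚ)) : ℂ) := by rw [hsval]; push_cast; ring
      have : s.im = 0 := by rw [hrat, Complex.ratCast_im]
      exact him.ne' this
  refine ⟨(a - d) / c, b / c, ?_⟩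
  have hcC : (c : ℂ) ≠ 0 := by exact_mod_cast hcne
  rw [hw] at key
  push_cast
  field_simp
  linear_combination -key

open Polynomial in
lemma quadField {s : ℂ} (him : 0 < s.im) (p q : ℚ) (hpq : s ^ 2 = (p : ℂ) * s + q) :
    Module.finrank ℚ (IntermediateField.adjoin ℚ {s}) = 2 := by
  set P : ℚ[X] := X ^ 2 - C p * X - C q with hP
  have hPs : Polynomial.aeval s P = 0 := by
    simp [hP]
    linear_combination hpq
  have hPdeg : P.natDegree = 2 := by
    rw [hP]; compute_degree!
  have hmono : P.Monic := by
    rw [hP]; monicity!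
  have hint : IsIntegral ℚ s := ⟨P, hmono, hPs⟩
  rw [IntermediateField.adjoin.finrank hint]
  have hnotrange : s ∉ (algebraMap ℚ ℂ).range := by
    rintro ⟨r, hr⟩
    have : s.im = 0 := by rw [← hr]; simp
    exact him.ne' this
  have h2le : 2 ≤ (minpoly ℚ s).natDegree := (minpoly.two_le_natDegree_iff hint).2 hnotrange
  have hle : (minpoly ℚ s).natDegree ≤ P.natDegree :=
    Polynomial.natDegree_le_natDegree (minpoly.min ℚ s hmono hPs)
  omega

lemma orbitOfMem {K : IntermediateField ℚ ℂ} (h2 : Module.finrank ℚ K = 2) {s z : ℂ}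
    (hsK : s ∈ K) (hsim : 0 < s.im) (hzK : z ∈ K) (hzim : 0 < z.im) :
    SameGOrbit s z := by
  obtain ⟨a, b, hab⟩ := reprK h2 hsK hsim.ne' hzK
  have haim : z.im = (a : ℝ) * s.im := by rw [hab]; simp
  have haR : (0 : ℝ) < (a : ℝ) := by
    have h := haim ▸ hzim
    rcases mul_pos_iff.mp h with ⟨h1, _⟩ | ⟨_, h2'⟩
    · exact h1
    · exact absurd h2' (not_lt.2 hsim.le)
  have ha : 0 < a := by exact_mod_cast haR
  exact ⟨a, b, 0, 1, by simpa using ha, by simp [moebQ, hab]⟩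

/-- Two special points of the upper half plane lie in the same GL₂⁺(ℚ)-orbit iff they
lie in the same imaginary quadratic field; moreover the orbit of a special point `s`
lying in an imaginary quadratic field `K` is exactly `K ∩ ℍ`. -/
theorem stmt1 :
    (∀ s t : ℂ, IsSpecialPt s → IsSpecialPt t →
      (SameGOrbit s t ↔ ∃ K : IntermediateField ℚ ℂ, IsImagQuad K ∧ s ∈ K ∧ t ∈ K)) ∧
    (∀ (s : ℂ) (K : IntermediateField ℚ ℂ), IsSpecialPt s → IsImagQuad K → s ∈ K →
      {t : ℂ | SameGOrbit s t} = {z : ℂ | z ∈ K ∧ 0 < z.im}) := by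
  constructor
  · intro s t hs ht
    constructor
    · rintro ⟨a, b, c, d, hdet, heq⟩
      obtain ⟨p, q, hpq⟩ := quadOfSpecial hs
      have hsmem : s ∈ IntermediateField.adjoin ℚ {s} :=
        IntermediateField.mem_adjoin_simple_self ℚ s
      refine ⟨IntermediateField.adjoin ℚ {s},
        ⟨quadField hs.1 p q hpq, s, hsmem, hs.1.ne'⟩, hsmem, ?_⟩
      rw [← heq]
      exact memK a b c d hsmem
    · rintro ⟨K, ⟨h2, -⟩, hsK, htK⟩
      exact orbitOfMem h2 hsK hs.1 htK ht.1
  · intro s K hs hK hsK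
    ext z
    simp only [Set.mem_setOf_eq]
    constructor
    · rintro ⟨a, b, c, d, hdet, heq⟩
      rw [← heq]
      exact ⟨memK a b c d hsK, imMoeb hdet hs.1⟩
    · rintro ⟨hzK, hzim⟩
      exact orbitOfMem hK.1 hsK hs.1 hzK hzim
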